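/- Let γ satisfy the self-shrinker ODE γ''/(1+γ'²) = (x/2 - 1/x)γ' - γ/2 near a point a with 0 < a < 2, and suppose (a²-4)γ'(a) = aγ(a) and a + γ(a)γ'(a) = 0. Then γ(a) = ±√(4-a²) and γ'(a) = ∓a/√(4-a²), so γ agrees near a with the circle profile β(x) = ±√(4-x²) (the surface is a piece of the sphere of radius 2). -/

import Mathlib

open Topology

/-- The first-order system vector field associated to the linear second-order ODE
satisfied by `v(x) = x² + γ(x)² - 4`. -/
noncomputable def shrF (γ : ℝ → ℝ) : ℝ → ℝ × ℝ → ℝ × ℝ :=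
  fun t u => (u.2, (1 + (deriv γ t) ^ 2) * ((t / 2 - 1 / t) * u.2 - u.1))

/-- Membership sets for the ODE uniqueness theorem: everything on `J`, nothing off `J`. -/
def shrS (J : Set ℝ) : ℝ → Set (ℝ × ℝ) :=
  fun t => {_u : ℝ × ℝ | t ∈ J}

/-- Auxiliary lemma: if `γ` satisfies the (rearranged) self-shrinker ODE on an open
set `I ⊆ (0,2)` and at `a ∈ I` we have `γ(a)² = 4 - a²` and `a + γ(a)γ'(a) = 0`, then
`x² + γ(x)² = 4` near `a`. -/
lemma stmt_18_aux (γ : ℝ → ℝ) (I : Set ℝ) (hI : IsOpen I) (hIsub : I ⊆ Set.Ioo 0 2)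
    (a : ℝ) (haI : a ∈ I) (hsm : ContDiffOn ℝ 2 γ I)
    (hode' : ∀ x ∈ I,
      deriv (deriv γ) x =
        (1 + (deriv γ x) ^ 2) * ((x / 2 - 1 / x) * deriv γ x - γ x / 2))
    (h1 : γ a ^ 2 = 4 - a ^ 2) (h2 : a + γ a * deriv γ a = 0) :
    ∀ᶠ x in 𝓝 a, γ x ^ 2 = 4 - x ^ 2 := by
  -- basic differentiability facts
  have hγ'C : ContDiffOn ℝ 1 (deriv γ) I := hsm.deriv_of_isOpen hI (by norm_num)
  have hdγ : ∀ t ∈ I, HasDerivAt γ (deriv γ t) t := by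
    intro t ht
    exact (((hsm.differentiableOn (by norm_num)) t ht).differentiableAt
      (hI.mem_nhds ht)).hasDerivAt
  have hdq : ∀ t ∈ I, HasDerivAt (deriv γ) (deriv (deriv γ) t) t := by
    intro t ht
    exact (((hγ'C.differentiableOn (by norm_num)) t ht).differentiableAt
      (hI.mem_nhds ht)).hasDerivAt
  have hcontq : ContinuousOn (deriv γ) I := hγ'C.continuousOn
  -- choose a compact interval J = Icc (a-ε) (a+ε) ⊆ I
  obtain ⟨r, hr, hball⟩ := Metric.mem_nhds_iff.mp (hI.mem_nhds haI)
  obtain ⟨ε, hεpos, hεr⟩ : ∃ ε : ℝ, 0 < ε ∧ ε < r := ⟨r / 2, by positivity, by linarith⟩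
  have hJsub : Set.Icc (a - ε) (a + ε) ⊆ I := by
    intro t ht
    apply hball
    have h' : t ∈ Metric.closedBall a ε := by
      rw [Real.closedBall_eq_Icc]; exact ht
    exact Metric.closedBall_subset_ball hεr h'
  have haJ : a ∈ Set.Icc (a - ε) (a + ε) := ⟨by linarith, by linarith⟩
  have hδpos : 0 < a - ε := (hIsub (hJsub ⟨le_rfl, by linarith⟩)).1
  -- bound on deriv γ over J
  obtain ⟨C, hC⟩ := IsCompact.exists_bound_of_continuousOn isCompact_Icc
    (hcontq.mono hJsub)
  have hC0 : 0 ≤ C := le_trans (norm_nonneg _) (hC a haJ)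
  have hM0 : 0 ≤ (1 + C ^ 2) * ((1 + 1 / (a - ε)) + 1) := by
    have h' : 0 < 1 / (a - ε) := by positivity
    nlinarith
  set K : NNReal := Real.toNNReal (max 1 ((1 + C ^ 2) * ((1 + 1 / (a - ε)) + 1))) with hKdef
  have hKcoe : (K : ℝ) = max 1 ((1 + C ^ 2) * ((1 + 1 / (a - ε)) + 1)) :=
    Real.coe_toNNReal _ (le_trans zero_le_one (le_max_left _ _))
  have hK1 : (1 : ℝ) ≤ K := by rw [hKcoe]; exact le_max_left _ _
  have hKM : (1 + C ^ 2) * ((1 + 1 / (a - ε)) + 1) ≤ (K : ℝ) := by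
    rw [hKcoe]; exact le_max_right _ _
  -- Lipschitz bound
  have hlip : ∀ t, LipschitzOnWith K (shrF γ t) (shrS (Set.Icc (a - ε) (a + ε)) t) := by
    intro t
    by_cases htJ : t ∈ Set.Icc (a - ε) (a + ε)
    · have hun : shrS (Set.Icc (a - ε) (a + ε)) t = Set.univ :=
        Set.eq_univ_of_forall fun _ => htJ
      rw [hun, lipschitzOnWith_univ]
      apply LipschitzWith.of_dist_le_mul
      intro u w
      have hDnn : 0 ≤ dist u w := dist_nonneg
      have hd1 : dist u.1 w.1 ≤ dist u w := by
        rw [Prod.dist_eq]; exact le_max_left _ _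
      have hd2 : dist u.2 w.2 ≤ dist u w := by
        rw [Prod.dist_eq]; exact le_max_right _ _
      have ha1 : |u.1 - w.1| ≤ dist u w := by rwa [Real.dist_eq] at hd1
      have ha2 : |u.2 - w.2| ≤ dist u w := by rwa [Real.dist_eq] at hd2
      -- bounds on coefficients
      have ht0 : 0 < t := lt_of_lt_of_le hδpos htJ.1
      have ht2 : t < 2 := (hIsub (hJsub htJ)).2
      have hinv : 1 / t ≤ 1 / (a - ε) := one_div_le_one_div_of_le hδpos htJ.1
      have hinvpos : 0 < 1 / t := by positivity
      have hcb : |t / 2 - 1 / t| ≤ 1 + 1 / (a - ε) := by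
        rw [abs_le]
        constructor <;> nlinarith
      have hq := hC t htJ
      rw [Real.norm_eq_abs] at hq
      have hPb : |1 + (deriv γ t) ^ 2| ≤ 1 + C ^ 2 := by
        rw [abs_of_nonneg (by positivity)]
        nlinarith [sq_abs (deriv γ t), abs_nonneg (deriv γ t)]
      have b1 : |((1 + (deriv γ t) ^ 2) * (t / 2 - 1 / t)) * (u.2 - w.2)| ≤
          ((1 + C ^ 2) * (1 + 1 / (a - ε))) * dist u w := by
        rw [abs_mul, abs_mul]
        exact mul_le_mul (mul_le_mul hPb hcb (abs_nonneg _) (by positivity)) ha2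
          (abs_nonneg _) (by positivity)
      have b2 : |(-(1 + (deriv γ t) ^ 2)) * (u.1 - w.1)| ≤ (1 + C ^ 2) * dist u w := by
        rw [abs_mul, abs_neg]
        exact mul_le_mul hPb ha1 (abs_nonneg _) (by positivity)
      rw [Prod.dist_eq]
      apply max_le
      · calc dist (shrF γ t u).1 (shrF γ t w).1 = dist u.2 w.2 := rfl
          _ ≤ dist u w := hd2
          _ ≤ (K : ℝ) * dist u w := le_mul_of_one_le_left hDnn hK1
      · have key : (shrF γ t u).2 - (shrF γ t w).2 =
            ((1 + (deriv γ t) ^ 2) * (t / 2 - 1 / t)) * (u.2 - w.2) +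
            (-(1 + (deriv γ t) ^ 2)) * (u.1 - w.1) := by
          simp only [shrF]; ring
        rw [Real.dist_eq, key]
        calc |((1 + (deriv γ t) ^ 2) * (t / 2 - 1 / t)) * (u.2 - w.2) +
              (-(1 + (deriv γ t) ^ 2)) * (u.1 - w.1)|
            ≤ |((1 + (deriv γ t) ^ 2) * (t / 2 - 1 / t)) * (u.2 - w.2)| +
              |(-(1 + (deriv γ t) ^ 2)) * (u.1 - w.1)| := abs_add_le _ _
          _ ≤ ((1 + C ^ 2) * (1 + 1 / (a - ε))) * dist u w +
              (1 + C ^ 2) * dist u w := add_le_add b1 b2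
          _ = ((1 + C ^ 2) * ((1 + 1 / (a - ε)) + 1)) * dist u w := by ring
          _ ≤ (K : ℝ) * dist u w := mul_le_mul_of_nonneg_right hKM hDnn
    · intro x hx
      exact absurd hx htJ
  -- the solution f
  have hf : ∀ᶠ t in 𝓝 a,
      HasDerivAt (fun x : ℝ => ((x ^ 2 + γ x ^ 2 - 4, 2 * x + 2 * (γ x * deriv γ x)) : ℝ × ℝ))
        (shrF γ t ((t ^ 2 + γ t ^ 2 - 4, 2 * t + 2 * (γ t * deriv γ t)))) t ∧
      ((t ^ 2 + γ t ^ 2 - 4, 2 * t + 2 * (γ t * deriv γ t)) : ℝ × ℝ)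
        ∈ shrS (Set.Icc (a - ε) (a + ε)) t := by
    have hmem : Set.Ioo (a - ε) (a + ε) ∈ 𝓝 a :=
      isOpen_Ioo.mem_nhds ⟨by linarith, by linarith⟩
    filter_upwards [hmem] with t ht
    have htJ : t ∈ Set.Icc (a - ε) (a + ε) := Set.Ioo_subset_Icc_self ht
    have htI : t ∈ I := hJsub htJ
    have ht0 : t ≠ 0 := ne_of_gt (hIsub htI).1
    constructor
    · have hA : HasDerivAt (fun x : ℝ => x ^ 2 + γ x ^ 2 - 4)
          (2 * t + 2 * (γ t * deriv γ t)) t := by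
        have h' : HasDerivAt (fun x : ℝ => x ^ 2 + γ x ^ 2 - 4) _ t :=
          ((hasDerivAt_pow 2 t).add ((hdγ t htI).pow 2)).sub_const 4
        convert h' using 1
        ring
      have hB : HasDerivAt (fun x : ℝ => 2 * x + 2 * (γ x * deriv γ x))
          (2 + 2 * (deriv γ t * deriv γ t + γ t * deriv (deriv γ) t)) t := by
        have hid : HasDerivAt (fun x : ℝ => 2 * x) 2 t := by
          simpa using (hasDerivAt_id t).const_mul (2 : ℝ)
        have hmulγ : HasDerivAt (fun x => γ x * deriv γ x)
            (deriv γ t * deriv γ t + γ t * deriv (deriv γ) t) t :=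
          (hdγ t htI).mul (hdq t htI)
        exact hid.add (hmulγ.const_mul (2 : ℝ))
      have hBd : 2 + 2 * (deriv γ t * deriv γ t + γ t * deriv (deriv γ) t) =
          (1 + (deriv γ t) ^ 2) *
            ((t / 2 - 1 / t) * (2 * t + 2 * (γ t * deriv γ t)) -
              (t ^ 2 + γ t ^ 2 - 4)) := by
        rw [hode' t htI]
        field_simp
        ring
      rw [hBd] at hB
      exact hA.prodMk hB
    · exact htJ
  -- the zero solution
  have hg : ∀ᶠ t in 𝓝 a,
      HasDerivAt (fun _ : ℝ => ((0 : ℝ), (0 : ℝ))) (shrF γ t ((0 : ℝ), (0 : ℝ))) t ∧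
        ((0 : ℝ), (0 : ℝ)) ∈ shrS (Set.Icc (a - ε) (a + ε)) t := by
    have hmem : Set.Ioo (a - ε) (a + ε) ∈ 𝓝 a :=
      isOpen_Ioo.mem_nhds ⟨by linarith, by linarith⟩
    filter_upwards [hmem] with t ht
    have htJ : t ∈ Set.Icc (a - ε) (a + ε) := Set.Ioo_subset_Icc_self ht
    constructor
    · have h' : shrF γ t ((0 : ℝ), (0 : ℝ)) = (0, 0) := by
        simp [shrF]
      rw [h']
      exact hasDerivAt_const t _
    · exact htJ
  have heq : ((a ^ 2 + γ a ^ 2 - 4, 2 * a + 2 * (γ a * deriv γ a)) : ℝ × ℝ)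
      = ((0 : ℝ), (0 : ℝ)) := by
    have h' : γ a * deriv γ a = -a := by linarith
    rw [h']
    simp only [Prod.mk.injEq]
    constructor
    · nlinarith
    · ring
  have hunique :=
    ODE_solution_unique_of_eventually (v := shrF γ) (s := shrS (Set.Icc (a - ε) (a + ε)))
      (Filter.Eventually.of_forall hlip) hf hg heq
  filter_upwards [hunique] with x hx
  have hx1 : x ^ 2 + γ x ^ 2 - 4 = 0 := congrArg Prod.fst hx
  linarith

theorem stmt_18 (γ : ℝ → ℝ) (I : Set ℝ) (hI : IsOpen I) (hIsub : I ⊆ Set.Ioo 0 2)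
    (a : ℝ) (haI : a ∈ I) (ha : 0 < a) (ha2 : a < 2)
    (hsm : ContDiffOn ℝ 2 γ I)
    (hode : ∀ x ∈ I,
      deriv (deriv γ) x / (1 + (deriv γ x) ^ 2) =
        (x / 2 - 1 / x) * deriv γ x - γ x / 2)
    (humb : (a ^ 2 - 4) * deriv γ a = a * γ a)
    (hX : a + γ a * deriv γ a = 0) :
    (γ a = Real.sqrt (4 - a ^ 2) ∨ γ a = -Real.sqrt (4 - a ^ 2)) ∧
    deriv γ a = -a / γ a ∧
    ((∀ᶠ x in 𝓝 a, γ x = Real.sqrt (4 - x ^ 2)) ∨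
      (∀ᶠ x in 𝓝 a, γ x = -Real.sqrt (4 - x ^ 2))) := by
  have ha0 : a ≠ 0 := ne_of_gt ha
  have hγa : γ a ≠ 0 := by
    intro h
    rw [h] at hX
    simp at hX
    exact ha0 hX
  have h2 : γ a * deriv γ a = -a := by linarith
  -- γ(a)² = 4 - a²
  have hsq : γ a ^ 2 = 4 - a ^ 2 := by
    have h3 : a * γ a ^ 2 = (a ^ 2 - 4) * (γ a * deriv γ a) := by
      calc a * γ a ^ 2 = γ a * (a * γ a) := by ring
        _ = γ a * ((a ^ 2 - 4) * deriv γ a) := by rw [humb]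
        _ = (a ^ 2 - 4) * (γ a * deriv γ a) := by ring
    rw [h2] at h3
    have h4 : a * γ a ^ 2 = a * (4 - a ^ 2) := by linarith
    exact mul_left_cancel₀ ha0 h4
  -- first conjunct
  have habs : |γ a| = Real.sqrt (4 - a ^ 2) := by
    rw [← Real.sqrt_sq_eq_abs, hsq]
  have hfirst : γ a = Real.sqrt (4 - a ^ 2) ∨ γ a = -Real.sqrt (4 - a ^ 2) :=
    (abs_eq (Real.sqrt_nonneg _)).mp habs
  -- second conjunct
  have hsecond : deriv γ a = -a / γ a := by
    field_simp
    linarith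
  refine ⟨hfirst, hsecond, ?_⟩
  -- rearranged ODE
  have hode' : ∀ x ∈ I, deriv (deriv γ) x =
      (1 + (deriv γ x) ^ 2) * ((x / 2 - 1 / x) * deriv γ x - γ x / 2) := by
    intro x hx
    have h := hode x hx
    have hne : 1 + (deriv γ x) ^ 2 ≠ 0 := by positivity
    rw [div_eq_iff hne] at h
    rw [h]; ring
  have hev := stmt_18_aux γ I hI hIsub a haI hsm hode' hsq hX
  have hcγ : ContinuousAt γ a := (hsm.continuousOn).continuousAt (hI.mem_nhds haI)
  rcases hγa.lt_or_gt with hneg | hpos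
  · right
    have hev2 : ∀ᶠ x in 𝓝 a, γ x < 0 := hcγ.eventually (eventually_lt_nhds hneg)
    filter_upwards [hev, hev2] with x hx hx2
    have h5 : Real.sqrt (4 - x ^ 2) = Real.sqrt (γ x ^ 2) := by rw [hx]
    rw [h5, Real.sqrt_sq_eq_abs, abs_of_neg hx2, neg_neg]
  · left
    have hev2 : ∀ᶠ x in 𝓝 a, 0 < γ x := hcγ.eventually (eventually_gt_nhds hpos)
    filter_upwards [hev, hev2] with x hx hx2
    have h5 : Real.sqrt (4 - x ^ 2) = Real.sqrt (γ x ^ 2) := by rw [hx]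
    rw [h5, Real.sqrt_sq hx2.le]
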